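/- The length of a zigzag path is well defined: if a continuous map b : [0,1] → [0,1] is both a zigzag path of length n and a zigzag path of length m, then n = m. (This is the claim of 1.3(a) that every controlled path of c𝕀∼ has a well-defined integral length.) -/

import Mathlib

open Set

/-- A continuous map `b : [0,1] → [0,1]` is a *zigzag path of length `n`* if (for `n ≥ 1`)
there is a partition `0 = t₀ < t₁ < ⋯ < tₙ = 1` such that `b (t i) = 1` for odd `i`,
`b (t i) = 0` for even `i` (in particular `b 0 = 0`), and `b` is nondecreasing on
`[t_{i-1}, t_i]` for odd `i`, nonincreasing there for even `i`; for `n = 0` it is the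
constant map at `0`. -/
def IsZigzag (b : ℝ → ℝ) (n : ℕ) : Prop :=
  ContinuousOn b (Icc 0 1) ∧ (∀ t ∈ Icc (0:ℝ) 1, b t ∈ Icc (0:ℝ) 1) ∧
  ((n = 0 ∧ ∀ t ∈ Icc (0:ℝ) 1, b t = 0) ∨
   (1 ≤ n ∧ ∃ t : ℕ → ℝ, t 0 = 0 ∧ t n = 1 ∧
     (∀ i < n, t i < t (i + 1)) ∧
     (∀ i ≤ n, b (t i) = if Odd i then 1 else 0) ∧
     (∀ i, 1 ≤ i → i ≤ n →
       if Odd i then MonotoneOn b (Icc (t (i - 1)) (t i))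
       else AntitoneOn b (Icc (t (i - 1)) (t i)))))

/-- Monotonicity of a partition. -/
lemma part_mono {t : ℕ → ℝ} {n : ℕ} (ht : ∀ i < n, t i < t (i + 1)) :
    ∀ j ≤ n, ∀ i ≤ j, t i ≤ t j := by
  intro j hj
  induction j with
  | zero => intro i hi; simp [Nat.le_zero.mp hi]
  | succ k ih =>
    intro i hi
    rcases Nat.eq_or_lt_of_le hi with h | h
    · simp [h]
    · exact (ih (by omega) i (by omega)).trans (ht k (by omega)).le

/-- Every point of `[t 0, t n]` lies in some subinterval of the partition. -/
lemma part_find {t : ℕ → ℝ} {x : ℝ} :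
    ∀ n : ℕ, (∀ i < n, t i < t (i + 1)) → 1 ≤ n → t 0 ≤ x → x ≤ t n →
    ∃ i, 1 ≤ i ∧ i ≤ n ∧ t (i - 1) ≤ x ∧ x ≤ t i := by
  intro n
  induction n with
  | zero => omega
  | succ k ih =>
    intro ht _ h0 h1
    by_cases hx : t k < x
    · exact ⟨k + 1, by omega, le_refl _, by simpa using hx.le, h1⟩
    · push_neg at hx
      rcases Nat.eq_zero_or_pos k with hk | hk
      · subst hk
        exact ⟨1, le_refl _, by omega, by simpa using h0,
          hx.trans (ht 0 (by omega)).le⟩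
      · obtain ⟨i, h⟩ := ih (fun i hi => ht i (by omega)) hk h0 hx
        exact ⟨i, h.1, by omega, h.2.2⟩

/-- Counting odd numbers below `k+1`. -/
lemma card_odd_range (k : ℕ) :
    ((Finset.range (k + 1)).filter (fun j => Odd j)).card = (k + 1) / 2 := by
  induction k with
  | zero => decide
  | succ k ih =>
    rw [Finset.range_add_one, Finset.filter_insert]
    rcases Nat.even_or_odd (k + 1) with h | h
    · rw [if_neg (by simpa using h)]
      obtain ⟨c, hc⟩ := h
      rw [ih]; omega
    · rw [if_pos h, Finset.card_insert_of_notMem (by simp), ih]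
      obtain ⟨c, hc⟩ := h
      omega

/-- Any point where `b` takes the value `1` is connected through ones to some odd
partition point. -/
lemma zig_ones {b : ℝ → ℝ} {n : ℕ} {t : ℕ → ℝ}
    (hr : ∀ u ∈ Icc (0:ℝ) 1, b u ∈ Icc (0:ℝ) 1)
    (hn : 1 ≤ n) (h0 : t 0 = 0) (h1 : t n = 1)
    (ht : ∀ i < n, t i < t (i + 1))
    (hv : ∀ i ≤ n, b (t i) = if Odd i then 1 else 0)
    (hmo : ∀ i, 1 ≤ i → i ≤ n →
       if Odd i then MonotoneOn b (Icc (t (i - 1)) (t i))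
       else AntitoneOn b (Icc (t (i - 1)) (t i)))
    {x : ℝ} (hx0 : 0 ≤ x) (hx1 : x ≤ 1) (hbx : b x = 1) :
    ∃ i, Odd i ∧ i ≤ n ∧
      ∀ z, min x (t i) ≤ z → z ≤ max x (t i) → b z = 1 := by
  have hA : t 0 ≤ x := by rw [h0]; exact hx0
  have hB : x ≤ t n := by rw [h1]; exact hx1
  obtain ⟨i, hi1, hin, hxl, hxr⟩ := part_find n ht hn hA hB
  have hti0 : (0:ℝ) ≤ t (i - 1) := by
    rw [← h0]; exact part_mono ht (i - 1) (by omega) 0 (by omega)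
  have hti1 : t i ≤ 1 := by
    rw [← h1]; exact part_mono ht n le_rfl i hin
  have hmem : ∀ z, t (i - 1) ≤ z → z ≤ t i → z ∈ Icc (0:ℝ) 1 :=
    fun z hz1 hz2 => ⟨hti0.trans hz1, hz2.trans hti1⟩
  have hmi := hmo i hi1 hin
  by_cases hodd : Odd i
  · rw [if_pos hodd] at hmi
    refine ⟨i, hodd, hin, fun z hz1 hz2 => ?_⟩
    rw [min_eq_left hxr] at hz1
    rw [max_eq_right hxr] at hz2
    have hz : z ∈ Icc (t (i - 1)) (t i) := ⟨hxl.trans hz1, hz2⟩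
    have hxm : x ∈ Icc (t (i - 1)) (t i) := ⟨hxl, hxr⟩
    have hle := hmi hxm hz hz1
    have hub := (hr z (hmem z hz.1 hz.2)).2
    linarith
  · rw [if_neg hodd] at hmi
    have hi2 : 2 ≤ i := by
      have : i ≠ 1 := fun h => hodd (h ▸ odd_one)
      omega
    have hoddi : Odd (i - 1) := by
      have he : Even i := Nat.not_odd_iff_even.mp hodd
      obtain ⟨c, hc⟩ := he
      exact ⟨c - 1, by omega⟩
    refine ⟨i - 1, hoddi, by omega, fun z hz1 hz2 => ?_⟩
    rw [min_eq_right hxl] at hz1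
    rw [max_eq_left hxl] at hz2
    have hz : z ∈ Icc (t (i - 1)) (t i) := ⟨hz1, hz2.trans hxr⟩
    have hxm : x ∈ Icc (t (i - 1)) (t i) := ⟨hxl, hxr⟩
    have hge := hmi hz hxm hz2
    have hv1 : b (t (i - 1)) = 1 := by rw [hv (i - 1) (by omega), if_pos hoddi]
    have hub := (hr z (hmem z hz.1 hz.2)).2
    linarith

/-- Counting lemma: the number of odd indices of one partition is at most that of
the other one. -/
lemma zig_count {b : ℝ → ℝ} {n m : ℕ} {t s : ℕ → ℝ}
    (hr : ∀ u ∈ Icc (0:ℝ) 1, b u ∈ Icc (0:ℝ) 1)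
    (hn : 1 ≤ n) (ht0 : t 0 = 0) (ht1 : t n = 1)
    (ht : ∀ i < n, t i < t (i + 1))
    (htv : ∀ i ≤ n, b (t i) = if Odd i then 1 else 0)
    (htm : ∀ i, 1 ≤ i → i ≤ n →
       if Odd i then MonotoneOn b (Icc (t (i - 1)) (t i))
       else AntitoneOn b (Icc (t (i - 1)) (t i)))
    (hm : 1 ≤ m) (hs0 : s 0 = 0) (hs1 : s m = 1)
    (hst : ∀ i < m, s i < s (i + 1))
    (hsv : ∀ i ≤ m, b (s i) = if Odd i then 1 else 0) :
    (m + 1) / 2 ≤ (n + 1) / 2 := by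
  have skey : ∀ j : ℕ, ∃ i : ℕ, Odd j → j ≤ m →
      Odd i ∧ i ≤ n ∧ ∀ z, min (s j) (t i) ≤ z → z ≤ max (s j) (t i) → b z = 1 := by
    intro j
    by_cases hj : Odd j ∧ j ≤ m
    · have hsj0 : (0:ℝ) ≤ s j := by
        rw [← hs0]; exact part_mono hst j hj.2 0 (Nat.zero_le _)
      have hsj1 : s j ≤ 1 := by
        rw [← hs1]; exact part_mono hst m le_rfl j hj.2
      have hb : b (s j) = 1 := by rw [hsv j hj.2, if_pos hj.1]
      obtain ⟨i, h⟩ := zig_ones hr hn ht0 ht1 ht htv htm hsj0 hsj1 hb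
      exact ⟨i, fun _ _ => h⟩
    · exact ⟨0, fun h1 h2 => absurd ⟨h1, h2⟩ hj⟩
  choose f hf using skey
  rw [← card_odd_range m, ← card_odd_range n]
  apply Finset.card_le_card_of_injOn f
  · intro j hj
    rw [Finset.mem_coe, Finset.mem_filter, Finset.mem_range] at hj
    rw [Finset.mem_coe, Finset.mem_filter, Finset.mem_range]
    obtain ⟨h1, h2⟩ := (hf j hj.2 (by omega))
    exact ⟨by omega, h1⟩
  · intro j hj j' hj' heq
    rw [Finset.mem_coe, Finset.mem_filter, Finset.mem_range] at hj hj'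
    by_contra hne
    have main : ∀ a c : ℕ, a < c → Odd a → Odd c → c ≤ m → f a = f c → False := by
      intro a c hac ha hc hcm heqac
      obtain ⟨_, _, hA⟩ := hf a ha (by omega)
      obtain ⟨_, _, hC⟩ := hf c hc (by omega)
      rw [heqac] at hA
      have hnodd : ¬ Odd (a + 1) := by
        have := Nat.odd_iff.mp ha
        rw [Nat.odd_iff]; omega
      have hz0 : b (s (a + 1)) = 0 := by
        rw [hsv (a + 1) (by omega), if_neg hnodd]
      have hlt : s a < s (a + 1) := hst a (by omega)
      have hle : s (a + 1) ≤ s c := part_mono hst c hcm (a + 1) (by omega)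
      have hz1 : b (s (a + 1)) = 1 := by
        rcases le_or_gt (t (f c)) (s (a + 1)) with h | h
        · exact hC (s (a + 1)) (le_trans (min_le_right _ _) h)
            (le_trans hle (le_max_left _ _))
        · exact hA (s (a + 1)) (le_trans (min_le_left _ _) hlt.le)
            (le_trans h.le (le_max_right _ _))
      rw [hz0] at hz1; norm_num at hz1
    rcases lt_trichotomy j j' with h | h | h
    · exact main j j' h hj.2 hj'.2 (by omega) heq
    · exact hne h
    · exact main j' j h hj'.2 hj.2 (by omega) heq.symm

/-- The length of a zigzag path is well defined. -/
theorem zigzag_length_unique (b : ℝ → ℝ) (n m : ℕ)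
    (hn : IsZigzag b n) (hm : IsZigzag b m) : n = m := by
  obtain ⟨hc, hr, hcase⟩ := hn
  obtain ⟨_, _, hcase'⟩ := hm
  have zero_case : ∀ k : ℕ, (∀ u ∈ Icc (0:ℝ) 1, b u = 0) →
      (1 ≤ k ∧ ∃ s : ℕ → ℝ, s 0 = 0 ∧ s k = 1 ∧
        (∀ i < k, s i < s (i + 1)) ∧
        (∀ i ≤ k, b (s i) = if Odd i then 1 else 0) ∧
        (∀ i, 1 ≤ i → i ≤ k →
          if Odd i then MonotoneOn b (Icc (s (i - 1)) (s i))
          else AntitoneOn b (Icc (s (i - 1)) (s i)))) → False := by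
    intro k hz ⟨hk1, s, hs0, hs1, hst, hsv, _⟩
    have hmem : s 1 ∈ Icc (0:ℝ) 1 := by
      constructor
      · rw [← hs0]; exact part_mono hst 1 hk1 0 (by omega)
      · rw [← hs1]; exact part_mono hst k le_rfl 1 hk1
    have h1 : b (s 1) = 1 := by rw [hsv 1 hk1, if_pos odd_one]
    rw [hz (s 1) hmem] at h1
    norm_num at h1
  rcases hcase with ⟨hn0, hz⟩ | ⟨hn1, t, ht0, ht1, ht, htv, htm⟩
  · rcases hcase' with ⟨hm0, _⟩ | hdata
    · omega
    · exact absurd hdata (fun h => zero_case m hz h)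
  · rcases hcase' with ⟨hm0, hz⟩ | ⟨hm1, s, hs0, hs1, hst, hsv, hsm⟩
    · exact absurd ⟨hn1, t, ht0, ht1, ht, htv, htm⟩ (fun h => zero_case n hz h)
    · have hbt := htv n le_rfl
      have hbs := hsv m le_rfl
      rw [ht1] at hbt
      rw [hs1] at hbs
      rw [hbt] at hbs
      have hiff : Odd n ↔ Odd m := by
        constructor <;> intro h
        · by_contra h'
          rw [if_pos h, if_neg h'] at hbs; norm_num at hbs
        · by_contra h'
          rw [if_neg h', if_pos h] at hbs; norm_num at hbs
      have hpar : n % 2 = m % 2 := by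
        rw [Nat.odd_iff, Nat.odd_iff] at hiff; omega
      have h1 := zig_count hr hn1 ht0 ht1 ht htv htm hm1 hs0 hs1 hst hsv
      have h2 := zig_count hr hm1 hs0 hs1 hst hsv hsm hn1 ht0 ht1 ht htv
      omega
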